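/- Let n = 4 and k = 1 with intervals: interval 1 and interval 2 overlapping each other, intervals 3 and 4 strictly below interval 1 but overlapping interval 2 (concretely ℓ_1 > u_3, ℓ_1 > u_4, and intervals 2,3,4 pairwise overlap, intervals 1,2 overlap). Then the unique maximizer p of min over feasible top-1 sets of the selected probability, subject to p ∈ [0,1]^4 with ∑p_i = 1, is p = (1/2, 1/2, 0, 0); while for k = 2 the unique maximizer subject to ∑p_i = 2 is p = (1, 1/3, 1/3, 1/3). In particular p_2 decreases from 1/2 to 1/3 as the budget increases from 1 to 2, so no ex ante optimal selection rule is monotone in budget. -/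

import Mathlib

/-- Rankings consistent with strict interval dominance. -/
def FeasiblePerm (n : ℕ) (l u : Fin n → ℝ) : Set (Equiv.Perm (Fin n)) :=
  {σ | ∀ i j : Fin n, l i > u j → σ i < σ j}

/-- Feasible top-`k` sets (0-indexed ranks). -/
def FeasibleTopK (n k : ℕ) (l u : Fin n → ℝ) : Set (Finset (Fin n)) :=
  {T | T.card = k ∧ ∃ σ ∈ FeasiblePerm n l u, ∀ j ∈ T, (σ j : ℕ) < k}

/-- Worst-case objective: minimum over feasible top-`k` sets of the selected mass. -/
noncomputable def wcObj (n k : ℕ) (l u : Fin n → ℝ) (p : Fin n → ℝ) : ℝ :=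
  sInf {x : ℝ | ∃ T ∈ FeasibleTopK n k l u, x = ∑ j ∈ T, p j}

/-- Feasible marginals with budget `k`. -/
def FeasMarg (n k : ℕ) (p : Fin n → ℝ) : Prop :=
  (∀ i, 0 ≤ p i ∧ p i ≤ 1) ∧ ∑ i, p i = (k : ℝ)

/-- with `n = 4`, intervals 1 and 2 overlapping, intervals 3, 4 strictly
below interval 1 but with intervals 2, 3, 4 pairwise overlapping (0-indexed: items
0,1,2,3), the unique maximin optimal marginals are `(1/2, 1/2, 0, 0)` for budget `k = 1`
and `(1, 1/3, 1/3, 1/3)` for budget `k = 2`.  In particular the probability of item 2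
decreases from `1/2` to `1/3` as the budget increases, so ex ante optimality is
incompatible with monotonicity in budget. -/
theorem nonmonotone_example (l u : Fin 4 → ℝ)
    (hvalid : ∀ i, l i ≤ u i)
    (h12 : l 0 ≤ u 1 ∧ l 1 ≤ u 0)
    (h13 : l 0 > u 2) (h14 : l 0 > u 3)
    (h23 : l 1 ≤ u 2 ∧ l 2 ≤ u 1)
    (h24 : l 1 ≤ u 3 ∧ l 3 ≤ u 1)
    (h34 : l 2 ≤ u 3 ∧ l 3 ≤ u 2) :
    (FeasMarg 4 1 ![1/2, 1/2, 0, 0] ∧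
      ∀ p : Fin 4 → ℝ, FeasMarg 4 1 p →
        wcObj 4 1 l u p ≤ wcObj 4 1 l u ![1/2, 1/2, 0, 0] ∧
        (wcObj 4 1 l u p = wcObj 4 1 l u ![1/2, 1/2, 0, 0] → p = ![1/2, 1/2, 0, 0])) ∧
    (FeasMarg 4 2 ![1, 1/3, 1/3, 1/3] ∧
      ∀ p : Fin 4 → ℝ, FeasMarg 4 2 p →
        wcObj 4 2 l u p ≤ wcObj 4 2 l u ![1, 1/3, 1/3, 1/3] ∧
        (wcObj 4 2 l u p = wcObj 4 2 l u ![1, 1/3, 1/3, 1/3] →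
          p = ![1, 1/3, 1/3, 1/3])) := by
  obtain ⟨h12a, h12b⟩ := h12
  obtain ⟨h23a, h23b⟩ := h23
  obtain ⟨h24a, h24b⟩ := h24
  obtain ⟨h34a, h34b⟩ := h34
  have hdom : ∀ i j : Fin 4, l i > u j → i = 0 ∧ (j = 2 ∨ j = 3) := by
    intro i j hij
    have hv0 := hvalid 0; have hv1 := hvalid 1; have hv2 := hvalid 2; have hv3 := hvalid 3
    fin_cases i <;> fin_cases j <;>
      first
        | exact ⟨by decide, Or.inl (by decide)⟩
        | exact ⟨by decide, Or.inr (by decide)⟩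
        | (exfalso;
           simp only [Fin.isValue, Fin.mk_zero, Fin.mk_one, Fin.reduceFinMk] at hij;
           linarith)
  have hperm : ∀ σ : Equiv.Perm (Fin 4), σ ∈ FeasiblePerm 4 l u ↔ (σ 0 < σ 2 ∧ σ 0 < σ 3) := by
    intro σ
    constructor
    · intro h; exact ⟨h 0 2 h13, h 0 3 h14⟩
    · rintro ⟨h1, h2⟩ i j hij
      obtain ⟨hi, hj⟩ := hdom i j hij
      subst hi
      rcases hj with hj | hj <;> subst hj <;> assumption
  -- top-1 characterization
  have htop1 : FeasibleTopK 4 1 l u = {{0}, {1}} := by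
    ext T
    simp only [FeasibleTopK, Set.mem_setOf_eq, Set.mem_insert_iff, Set.mem_singleton_iff]
    constructor
    · rintro ⟨hcard, σ, hσ, hT⟩
      obtain ⟨h02, h03⟩ := (hperm σ).1 hσ
      rw [Fin.lt_def] at h02 h03
      obtain ⟨j, rfl⟩ := Finset.card_eq_one.mp hcard
      have hj := hT j (Finset.mem_singleton_self j)
      fin_cases j
      · exact Or.inl rfl
      · exact Or.inr rfl
      · exfalso
        simp only [Fin.isValue, Fin.mk_zero, Fin.mk_one, Fin.reduceFinMk] at hj
        omega
      · exfalso
        simp only [Fin.isValue, Fin.mk_zero, Fin.mk_one, Fin.reduceFinMk] at hj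
        omega
    · rintro (rfl | rfl)
      · refine ⟨rfl, 1, (hperm 1).2 (by decide), ?_⟩
        intro j hj
        rw [Finset.mem_singleton] at hj
        subst hj; decide
      · refine ⟨rfl, Equiv.swap 0 1, (hperm _).2 (by decide), ?_⟩
        intro j hj
        rw [Finset.mem_singleton] at hj
        subst hj; decide
  -- top-2 characterization
  have htop2 : FeasibleTopK 4 2 l u = {{0, 1}, {0, 2}, {0, 3}} := by
    ext T
    simp only [FeasibleTopK, Set.mem_setOf_eq, Set.mem_insert_iff, Set.mem_singleton_iff]
    constructor
    · rintro ⟨hcard, σ, hσ, hT⟩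
      obtain ⟨h02, h03⟩ := (hperm σ).1 hσ
      rw [Fin.lt_def] at h02 h03
      have hne01 : (σ 0 : ℕ) ≠ (σ 1 : ℕ) := by
        simp [Fin.val_eq_val, σ.injective.eq_iff]
      have hne12 : (σ 1 : ℕ) ≠ (σ 2 : ℕ) := by
        simp [Fin.val_eq_val, σ.injective.eq_iff]
      have hne13 : (σ 1 : ℕ) ≠ (σ 3 : ℕ) := by
        simp [Fin.val_eq_val, σ.injective.eq_iff]
      have hne23 : (σ 2 : ℕ) ≠ (σ 3 : ℕ) := by
        simp [Fin.val_eq_val, σ.injective.eq_iff]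
      obtain ⟨a, b, hab, rfl⟩ := Finset.card_eq_two.mp hcard
      have ha := hT a (by simp)
      have hb := hT b (by simp)
      fin_cases a <;> fin_cases b <;>
        simp only [Fin.isValue, Fin.mk_zero, Fin.mk_one, Fin.reduceFinMk] at ha hb hab ⊢ <;>
        first
          | exact absurd rfl hab
          | trivial
          | exact Or.inl (by decide)
          | exact Or.inr (Or.inl (by decide))
          | exact Or.inr (Or.inr (by decide))
          | (exfalso; omega)
    · rintro (rfl | rfl | rfl)
      · refine ⟨by decide, 1, (hperm 1).2 (by decide), ?_⟩
        intro j hj; fin_cases hj <;> decide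
      · refine ⟨by decide, Equiv.swap 1 2, (hperm _).2 (by decide), ?_⟩
        intro j hj; fin_cases hj <;> decide
      · refine ⟨by decide, Equiv.swap 1 3, (hperm _).2 (by decide), ?_⟩
        intro j hj; fin_cases hj <;> decide
  -- value of the objective
  have hwc1 : ∀ p : Fin 4 → ℝ, wcObj 4 1 l u p = min (p 0) (p 1) := by
    intro p
    have hset : {x : ℝ | ∃ T ∈ FeasibleTopK 4 1 l u, x = ∑ j ∈ T, p j} = {p 0, p 1} := by
      rw [htop1]
      ext x
      simp only [Set.mem_setOf_eq, Set.mem_insert_iff, Set.mem_singleton_iff]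
      constructor
      · rintro ⟨T, (rfl | rfl), rfl⟩
        · exact Or.inl (Finset.sum_singleton _ _)
        · exact Or.inr (Finset.sum_singleton _ _)
      · rintro (rfl | rfl)
        · exact ⟨{0}, Or.inl rfl, (Finset.sum_singleton _ _).symm⟩
        · exact ⟨{1}, Or.inr rfl, (Finset.sum_singleton _ _).symm⟩
    rw [wcObj, hset, csInf_pair]
  have hsum2 : ∀ (p : Fin 4 → ℝ) (j : Fin 4), j ≠ 0 → ∑ i ∈ {0, j}, p i = p 0 + p j := by
    intro p j hj
    rw [Finset.sum_pair (Ne.symm hj)]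
  have hwc2 : ∀ p : Fin 4 → ℝ,
      wcObj 4 2 l u p = min (p 0 + p 1) (min (p 0 + p 2) (p 0 + p 3)) := by
    intro p
    have hset : {x : ℝ | ∃ T ∈ FeasibleTopK 4 2 l u, x = ∑ j ∈ T, p j}
        = {p 0 + p 1, p 0 + p 2, p 0 + p 3} := by
      rw [htop2]
      ext x
      simp only [Set.mem_setOf_eq, Set.mem_insert_iff, Set.mem_singleton_iff]
      constructor
      · rintro ⟨T, (rfl | rfl | rfl), rfl⟩
        · exact Or.inl (by rw [hsum2 p 1 (by decide)])
        · exact Or.inr (Or.inl (by rw [hsum2 p 2 (by decide)]))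
        · exact Or.inr (Or.inr (by rw [hsum2 p 3 (by decide)]))
      · rintro (rfl | rfl | rfl)
        · exact ⟨{0, 1}, Or.inl rfl, (hsum2 p 1 (by decide)).symm⟩
        · exact ⟨{0, 2}, Or.inr (Or.inl rfl), (hsum2 p 2 (by decide)).symm⟩
        · exact ⟨{0, 3}, Or.inr (Or.inr rfl), (hsum2 p 3 (by decide)).symm⟩
    rw [wcObj, hset]
    rw [csInf_insert (((Set.finite_singleton _).insert _).bddBelow)
      ⟨p 0 + p 2, Set.mem_insert _ _⟩, csInf_pair]
  refine ⟨⟨?_, ?_⟩, ⟨?_, ?_⟩⟩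
  · constructor
    · intro i; fin_cases i <;> norm_num
    · simp [Fin.sum_univ_four]; norm_num
  · intro p hp
    obtain ⟨hbd, hsum⟩ := hp
    rw [Fin.sum_univ_four] at hsum
    have h0 := hbd 0; have h1 := hbd 1; have h2 := hbd 2; have h3 := hbd 3
    rw [hwc1, hwc1]
    have hv : min (![1/2, 1/2, 0, 0] 0 : ℝ) (![1/2, 1/2, 0, 0] 1) = 1/2 := by
      norm_num
    rw [hv]
    constructor
    · rcases le_total (p 0) (p 1) with h | h
      · rw [min_eq_left h]; push_cast at hsum; linarith
      · rw [min_eq_right h]; push_cast at hsum; linarith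
    · intro heq
      have hle0 : min (p 0) (p 1) ≤ p 0 := min_le_left _ _
      have hle1 : min (p 0) (p 1) ≤ p 1 := min_le_right _ _
      rw [heq] at hle0 hle1
      push_cast at hsum
      funext i
      fin_cases i <;> simp <;> linarith
  · constructor
    · intro i; fin_cases i <;> norm_num
    · simp [Fin.sum_univ_four]; norm_num
  · intro p hp
    obtain ⟨hbd, hsum⟩ := hp
    rw [Fin.sum_univ_four] at hsum
    have h0 := hbd 0; have h1 := hbd 1; have h2 := hbd 2; have h3 := hbd 3
    rw [hwc2, hwc2]
    have hv : min ((![1, 1/3, 1/3, 1/3] : Fin 4 → ℝ) 0 + ![1, 1/3, 1/3, 1/3] 1)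
        (min ((![1, 1/3, 1/3, 1/3] : Fin 4 → ℝ) 0 + ![1, 1/3, 1/3, 1/3] 2)
          ((![1, 1/3, 1/3, 1/3] : Fin 4 → ℝ) 0 + ![1, 1/3, 1/3, 1/3] 3)) = 4/3 := by
      norm_num [Matrix.cons_val_two, Matrix.cons_val_three]
    rw [hv]
    push_cast at hsum
    constructor
    · have hm1 : min (p 0 + p 1) (min (p 0 + p 2) (p 0 + p 3)) ≤ p 0 + p 1 := min_le_left _ _
      have hm2 : min (p 0 + p 1) (min (p 0 + p 2) (p 0 + p 3)) ≤ p 0 + p 2 :=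
        le_trans (min_le_right _ _) (min_le_left _ _)
      have hm3 : min (p 0 + p 1) (min (p 0 + p 2) (p 0 + p 3)) ≤ p 0 + p 3 :=
        le_trans (min_le_right _ _) (min_le_right _ _)
      linarith [h0.2]
    · intro heq
      have hm1 : min (p 0 + p 1) (min (p 0 + p 2) (p 0 + p 3)) ≤ p 0 + p 1 := min_le_left _ _
      have hm2 : min (p 0 + p 1) (min (p 0 + p 2) (p 0 + p 3)) ≤ p 0 + p 2 :=
        le_trans (min_le_right _ _) (min_le_left _ _)
      have hm3 : min (p 0 + p 1) (min (p 0 + p 2) (p 0 + p 3)) ≤ p 0 + p 3 :=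
        le_trans (min_le_right _ _) (min_le_right _ _)
      rw [heq] at hm1 hm2 hm3
      have hp0 : p 0 = 1 := by linarith [h0.2]
      funext i
      fin_cases i <;> simp <;> linarith
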